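/- arXiv:math/0609638 — 3 statements merged into one kernel-verified Lean document; each statement's English description precedes it below -/
import Mathlib

section
/- Let p be a prime, κ a limit ordinal, (G_α)_{α<κ} an increasing continuous chain of abelian groups with union G, and (λ_α)_{α<κ} a nondecreasing continuous sequence of cardinals with supremum λ. Suppose for each α < κ there are homomorphisms f_γ^α : G_α → ℤ/pℤ for γ < λ_α such that: (a) f_γ^β restricted to G_α equals f_γ^α whenever α ≤ β < κ and γ < λ_α; (b) for each α, the family (f_γ^α)_{γ<λ_α} is linearly independent over ℤ/pℤ; (c) if α ≤ β < κ and λ_α ≤ γ < λ_β, then f_γ^β restricted to G_α is zero. Then the homomorphisms f_γ : G → ℤ/pℤ (γ < λ) defined by f_γ = ⋃{f_γ^α : γ < λ_α} form a linearly independent family in Hom(G, ℤ/pℤ). -/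
/-- Let `p` be a prime, `κ` a limit ordinal, `(G_α)_{α<κ}` an increasing
continuous chain of subgroups of an abelian group `G` with union `G`, and
`(λ_α)_{α<κ}` a nondecreasing continuous sequence of cardinals with supremum
`λ`.  Given homomorphisms `f_γ^α : G_α → ℤ/pℤ` (`γ < λ_α`) that are compatible
under restriction, linearly independent at each level `α`, and such that
`f_γ^β` vanishes on `G_α` whenever `λ_α ≤ γ < λ_β`, the union homomorphisms
`f_γ : G → ℤ/pℤ` (`γ < λ`) form a linearly independent family in
`Hom(G, ℤ/pℤ)`. -/
theorem linearIndependent_of_chain (p : ℕ) (hp : p.Prime)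
    (κ : Ordinal) (hκ : Order.IsSuccLimit κ)
    (G : Type) [AddCommGroup G]
    (Gs : Ordinal → AddSubgroup G)
    (hmono : ∀ {α β : Ordinal}, α ≤ β → β < κ → Gs α ≤ Gs β)
    (hcont : ∀ δ < κ, Order.IsSuccLimit δ →
      (Gs δ : Set G) = ⋃ (α : Ordinal) (_ : α < δ), (Gs α : Set G))
    (hunion : (⋃ (α : Ordinal) (_ : α < κ), (Gs α : Set G)) = Set.univ)
    (lam : Ordinal → Cardinal)
    (hlmono : ∀ {α β : Ordinal}, α ≤ β → β < κ → lam α ≤ lam β)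
    (hlcont : ∀ δ < κ, Order.IsSuccLimit δ → lam δ = ⨆ α : {α : Ordinal // α < δ}, lam α.1)
    (lamSup : Cardinal)
    (hsup : lamSup = ⨆ α : {α : Ordinal // α < κ}, lam α.1)
    (f : (α : Ordinal) → Ordinal → (Gs α →+ ZMod p))
    -- (a) compatibility under restriction
    (ha : ∀ {α β γ : Ordinal} (h : Gs α ≤ Gs β), α ≤ β → β < κ → γ < (lam α).ord →
      (f β γ).comp (AddSubgroup.inclusion h) = f α γ)
    -- (b) linear independence at each level
    (hb : ∀ α < κ, LinearIndependent (ZMod p)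
      (fun γ : {γ : Ordinal // γ < (lam α).ord} => f α γ.1))
    -- (c) new homomorphisms vanish on old groups
    (hc : ∀ {α β γ : Ordinal} (h : Gs α ≤ Gs β), α ≤ β → β < κ →
      (lam α).ord ≤ γ → γ < (lam β).ord →
      (f β γ).comp (AddSubgroup.inclusion h) = 0)
    -- the union homomorphisms `f_γ = ⋃ {f_γ^α : γ < λ_α}`
    (F : Ordinal → (G →+ ZMod p))
    (hF : ∀ {α γ : Ordinal}, α < κ → γ < (lam α).ord →
      ∀ x : Gs α, F γ ↑x = f α γ x) :
    LinearIndependent (ZMod p)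
      (fun γ : {γ : Ordinal // γ < lamSup.ord} => F γ.1) := by
  classical
  rw [linearIndependent_iff']
  intro s g hsum i hi
  have hex : ∀ j : {γ : Ordinal // γ < lamSup.ord}, ∃ α, α < κ ∧ j.1 < (lam α).ord := by
    intro j
    by_contra hcon
    push_neg at hcon
    have hcard : j.1.card < lamSup := Cardinal.lt_ord.mp j.2
    have : Nonempty {α : Ordinal // α < κ} := ⟨⟨0, hκ.pos⟩⟩
    have hle : lamSup ≤ j.1.card :=
      hsup.trans_le (ciSup_le fun α => Cardinal.ord_le.mp (hcon α.1 α.2))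
    exact absurd hcard hle.not_gt
  choose φ hφκ hφlt using hex
  have hsne : s.Nonempty := ⟨i, hi⟩
  set A := s.sup' hsne φ with hA
  have hAκ : A < κ := Finset.sup'_lt_iff hsne |>.mpr fun j _ => hφκ j
  have hlt : ∀ j ∈ s, j.1 < (lam A).ord := fun j hj =>
    lt_of_lt_of_le (hφlt j)
      (Cardinal.ord_le_ord.mpr (hlmono (Finset.le_sup' φ hj) hAκ))
  have hb' := linearIndependent_iff'.mp (hb A hAκ)
  set t : Finset {γ : Ordinal // γ < (lam A).ord} :=
    s.attach.image (fun j => ⟨j.1.1, hlt j.1 j.2⟩) with ht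
  set g' : {γ : Ordinal // γ < (lam A).ord} → ZMod p :=
    fun x => if h : x.1 < lamSup.ord then g ⟨x.1, h⟩ else 0 with hg'
  have hinj : ∀ x ∈ s.attach, ∀ y ∈ s.attach,
      (fun j : {x // x ∈ s} => (⟨j.1.1, hlt j.1 j.2⟩ : {γ : Ordinal // γ < (lam A).ord})) x
        = (fun j : {x // x ∈ s} => (⟨j.1.1, hlt j.1 j.2⟩ : {γ : Ordinal // γ < (lam A).ord})) y
      → x = y := by
    intro x _ y _ hxy
    simp only [Subtype.mk.injEq] at hxy
    exact Subtype.ext (Subtype.ext hxy)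
  have key : ∑ x ∈ t, g' x • f A x.1 = 0 := by
    rw [ht, Finset.sum_image hinj]
    ext x
    have h1 : ∀ j : {x // x ∈ s},
        g' (⟨j.1.1, hlt j.1 j.2⟩ : {γ : Ordinal // γ < (lam A).ord}) = g j.1 := by
      intro j
      simp only [hg', dif_pos j.1.2]
    have h2 : (∑ j ∈ s, g j • F j.1) (x : G) = 0 := by rw [hsum]; rfl
    rw [AddMonoidHom.finset_sum_apply] at h2
    calc (∑ j ∈ s.attach, g' (⟨j.1.1, hlt j.1 j.2⟩ : {γ : Ordinal // γ < (lam A).ord}) • f A j.1.1) x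
        = ∑ j ∈ s.attach, g j.1 • (f A j.1.1 x) := by
          rw [AddMonoidHom.finset_sum_apply]
          exact Finset.sum_congr rfl fun j _ => by rw [h1]; rfl
      _ = ∑ j ∈ s.attach, g j.1 • (F j.1.1 (x : G)) := by
          exact Finset.sum_congr rfl fun j _ => by rw [hF hAκ (hlt j.1 j.2) x]
      _ = ∑ j ∈ s, g j • (F j.1 (x : G)) := by
          rw [← Finset.sum_attach s (fun j => g j • F j.1 (x : G))]
      _ = 0 := by
          rw [← h2]
          exact Finset.sum_congr rfl fun j _ => rfl
  have hmem : (⟨i.1, hlt i hi⟩ : {γ : Ordinal // γ < (lam A).ord}) ∈ t := by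
    rw [ht]
    exact Finset.mem_image.mpr ⟨⟨i, hi⟩, Finset.mem_attach _ _, rfl⟩
  have := hb' t g' key ⟨i.1, hlt i hi⟩ hmem
  simpa only [hg', dif_pos i.2, Subtype.coe_eta] using this
end

section
/- Let p be a prime, κ a regular uncountable cardinal, S ⊆ κ an unbounded subset, (G_α)_{α<κ} an increasing continuous chain of abelian groups with union G, and (λ_α)_{α<κ} a nondecreasing continuous sequence of cardinals with supremum λ. Suppose there are homomorphisms f_γ^α : G_α → ℤ/pℤ (γ < λ_α) and h_{γ,δ}^α : G_α → ℤ (γ < λ_α, α ≤ δ < κ) such that: (a) f_γ^β restricted to G_α equals f_γ^α for α ≤ β, γ < λ_α; (b) for each α the family (f_γ^α)_{γ<λ_α} is linearly independent over ℤ/pℤ; (c) the composition of h_{γ,δ}^α with the reduction ℤ → ℤ/pℤ equals f_γ^α; (d) h_{γ,δ}^β restricted to G_α equals h_{γ,δ}^α whenever α < β ≤ δ and γ < λ_α; (e) for each α, the family (h_{γ,δ}^α)_{γ<λ_α, α≤δ<κ} is ℤ-linearly independent, so that M_α := ⊕_{γ<λ_α, α≤δ<κ} ℤ·h_{γ,δ}^α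 is a free subgroup of Hom(G_α,ℤ) with this basis, representations being unique; (f) for every α ∈ S, every g ∈ Hom(G_{α+1},ℤ) whose composition with ℤ → ℤ/pℤ is a nonzero element of the ℤ/pℤ-span of {f_γ^{α+1} : γ < λ_{α+1}} belongs to M_{α+1}; (g) if α ≤ β < κ and λ_α ≤ γ < λ_β, then f_γ^β and h_{γ,ρ}^β (ρ ≥ β) restrict to zero on G_α. Define f_γ : G → ℤ/pℤ by f_γ = ⋃{f_γ^α : γ < λ_α}. Then no nonzero finite ℤ/pℤ-linear combination of the f_γ (γ < λ) equals the composition of some g ∈ Hom(G,ℤ) with the reduction ℤ → ℤ/pℤ; consequently the classes of the f_γ in Hom(G,ℤ/pℤ)/φ^p(Hom(G,ℤ)) are linearly independent, where φ^p is composition with ℤ → ℤ/pℤ. -/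
/-- The map `φ^p : Hom(G,ℤ) → Hom(G,ℤ/pℤ)` induced by the reduction `ℤ → ℤ/pℤ`. -/
def phiP (p : ℕ) (G : Type) [AddCommGroup G] : (G →+ ℤ) → (G →+ ZMod p) :=
  fun f => (Int.castAddHom (ZMod p)).comp f

/-- The image `φ^p(Hom(G,ℤ))`, as a `ℤ/pℤ`-subspace of `Hom(G,ℤ/pℤ)`. -/
def phiPRange (p : ℕ) (G : Type) [AddCommGroup G] :
    Submodule (ZMod p) (G →+ ZMod p) where
  carrier := Set.range (phiP p G)
  zero_mem' := ⟨0, by ext x; simp [phiP]⟩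
  add_mem' := by
    rintro _ _ ⟨f, rfl⟩ ⟨g, rfl⟩
    exact ⟨f + g, by ext x; simp [phiP]⟩
  smul_mem' := by
    rintro c _ ⟨f, rfl⟩
    obtain ⟨m, rfl⟩ := ZMod.intCast_surjective c
    refine ⟨m • f, ?_⟩
    ext x
    simp [phiP]

/-- Shelah–Strüngmann: in the situation of an increasing continuous chain
`(G_α)_{α<κ.ord}` of subgroups of `G` (`κ` regular uncountable) with union `G`,
`S` unbounded in `κ.ord`, a nondecreasing continuous sequence of cardinals
`(λ_α)` with supremum `λ`, homomorphisms `f_γ^α : G_α → ℤ/pℤ` and lifts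
`h_{γ,δ}^α : G_α → ℤ` satisfying (a)–(g), no nonzero finite `ℤ/pℤ`-linear
combination of the union homomorphisms `f_γ : G → ℤ/pℤ` (`γ < λ`) factors
through the reduction `ℤ → ℤ/pℤ` via some `g ∈ Hom(G,ℤ)`; consequently the
classes of the `f_γ` in `Hom(G,ℤ/pℤ)/φ^p(Hom(G,ℤ))` are linearly independent. -/
theorem no_lifting_of_combinations (p : ℕ) (hp : p.Prime)
    (κ : Cardinal) (hreg : κ.IsRegular) (hunc : Cardinal.aleph0 < κ)
    (S : Set Ordinal) (hSsub : ∀ α ∈ S, α < κ.ord)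
    (hSunb : ∀ β < κ.ord, ∃ α ∈ S, β ≤ α)
    (G : Type) [AddCommGroup G]
    (Gs : Ordinal → AddSubgroup G)
    (hmono : ∀ {α β : Ordinal}, α ≤ β → β < κ.ord → Gs α ≤ Gs β)
    (hcont : ∀ δ < κ.ord, Order.IsSuccLimit δ →
      (Gs δ : Set G) = ⋃ (α : Ordinal) (_ : α < δ), (Gs α : Set G))
    (hunion : (⋃ (α : Ordinal) (_ : α < κ.ord), (Gs α : Set G)) = Set.univ)
    (lam : Ordinal → Cardinal)
    (hlmono : ∀ {α β : Ordinal}, α ≤ β → β < κ.ord → lam α ≤ lam β)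
    (hlcont : ∀ δ < κ.ord, Order.IsSuccLimit δ →
      lam δ = ⨆ α : {α : Ordinal // α < δ}, lam α.1)
    (lamSup : Cardinal)
    (hsup : lamSup = ⨆ α : {α : Ordinal // α < κ.ord}, lam α.1)
    (f : (α : Ordinal) → Ordinal → (Gs α →+ ZMod p))
    (h : (α : Ordinal) → Ordinal → Ordinal → (Gs α →+ ℤ))
    -- (a) compatibility of the `f`'s under restriction
    (hfa : ∀ {α β γ : Ordinal} (hsub : Gs α ≤ Gs β), α ≤ β → β < κ.ord →
      γ < (lam α).ord → (f β γ).comp (AddSubgroup.inclusion hsub) = f α γ)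
    -- (b) linear independence of the `f`'s at each level
    (hfb : ∀ α < κ.ord, LinearIndependent (ZMod p)
      (fun γ : {γ : Ordinal // γ < (lam α).ord} => f α γ.1))
    -- (c) each `h_{γ,δ}^α` lifts `f_γ^α` along `ℤ → ℤ/pℤ`
    (hfc : ∀ {α γ δ : Ordinal}, α < κ.ord → γ < (lam α).ord → α ≤ δ → δ < κ.ord →
      (Int.castAddHom (ZMod p)).comp (h α γ δ) = f α γ)
    -- (d) compatibility of the `h`'s under restriction
    (hfd : ∀ {α β γ δ : Ordinal} (hsub : Gs α ≤ Gs β), α < β → β ≤ δ → δ < κ.ord →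
      γ < (lam α).ord → (h β γ δ).comp (AddSubgroup.inclusion hsub) = h α γ δ)
    -- (e) `ℤ`-linear independence of the `h`'s at each level, so that
    -- `M_α = ⊕ ℤ·h_{γ,δ}^α` is free with basis the `h`'s
    (hfe : ∀ α < κ.ord, LinearIndependent ℤ
      (fun q : {q : Ordinal × Ordinal //
          q.1 < (lam α).ord ∧ α ≤ q.2 ∧ q.2 < κ.ord} => h α q.1.1 q.1.2))
    -- (f) for `α ∈ S`, homomorphisms `G_{α+1} → ℤ` whose reduction is a nonzero
    -- element of the span of the `f_γ^{α+1}` lie in `M_{α+1}`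
    (hff : ∀ α ∈ S, ∀ g : Gs (α + 1) →+ ℤ,
      (Int.castAddHom (ZMod p)).comp g ∈ Submodule.span (ZMod p)
        (Set.range fun γ : {γ : Ordinal // γ < (lam (α + 1)).ord} =>
          f (α + 1) γ.1) →
      (Int.castAddHom (ZMod p)).comp g ≠ 0 →
      g ∈ Submodule.span ℤ
        (Set.range fun q : {q : Ordinal × Ordinal //
            q.1 < (lam (α + 1)).ord ∧ α + 1 ≤ q.2 ∧ q.2 < κ.ord} =>
          h (α + 1) q.1.1 q.1.2))
    -- (g) new `f`'s and `h`'s vanish on old groups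
    (hfg : ∀ {α β γ : Ordinal} (hsub : Gs α ≤ Gs β), α ≤ β → β < κ.ord →
      (lam α).ord ≤ γ → γ < (lam β).ord →
      (f β γ).comp (AddSubgroup.inclusion hsub) = 0 ∧
      ∀ ρ : Ordinal, β ≤ ρ → ρ < κ.ord →
        (h β γ ρ).comp (AddSubgroup.inclusion hsub) = 0)
    -- the union homomorphisms `f_γ = ⋃ {f_γ^α : γ < λ_α}`
    (F : Ordinal → (G →+ ZMod p))
    (hF : ∀ {α γ : Ordinal}, α < κ.ord → γ < (lam α).ord →
      ∀ x : Gs α, F γ ↑x = f α γ x) :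
    (∀ (E : Finset Ordinal), (∀ γ ∈ E, γ < lamSup.ord) →
      ∀ (z : Ordinal → ZMod p) (g : G →+ ℤ),
        ∑ γ ∈ E, z γ • F γ = (Int.castAddHom (ZMod p)).comp g →
        ∑ γ ∈ E, z γ • F γ = 0) ∧
    LinearIndependent (ZMod p)
      (fun γ : {γ : Ordinal // γ < lamSup.ord} =>
        Submodule.Quotient.mk (p := phiPRange p G) (F γ.1)) := by
  
  classical
  have hκlim : Order.IsSuccLimit κ.ord := Cardinal.isSuccLimit_ord (le_of_lt hunc)
  have hκpos : (0 : Ordinal) < κ.ord := hκlim.bot_lt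
  have hlt1 : ∀ a : Ordinal, a < a + 1 := fun a => by
    rw [Ordinal.add_one_eq_succ]; exact Order.lt_succ a
  have hle1 : ∀ a : Ordinal, a ≤ a + 1 := fun a => le_of_lt (hlt1 a)
  have hsucc : ∀ {a : Ordinal}, a < κ.ord → a + 1 < κ.ord := fun {a} ha => by
    rw [Ordinal.add_one_eq_succ]; exact hκlim.succ_lt ha
  -- finite sets of ordinals `< lamSup.ord` are bounded by some level
  have hbound : ∀ E : Finset Ordinal, (∀ γ ∈ E, γ < lamSup.ord) →
      ∃ α₀, α₀ < κ.ord ∧ ∀ γ ∈ E, γ < (lam α₀).ord := by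
    intro E
    induction E using Finset.induction_on with
    | empty => intro _; exact ⟨0, hκpos, by simp⟩
    | insert _ _ hni ih =>
      rename_i a s
      intro hE
      obtain ⟨α₀, hα₀κ, hAll⟩ := ih (fun γ hγ => hE γ (Finset.mem_insert_of_mem hγ))
      have ha : a.card < lamSup := Cardinal.lt_ord.1 (hE a (Finset.mem_insert_self a s))
      rw [hsup] at ha
      have hex : ∃ i : {α : Ordinal // α < κ.ord}, a.card < lam i.1 := by
        by_contra hno
        push_neg at hno
        exact absurd (ciSup_le' fun i => hno i) (not_le.2 ha)
      obtain ⟨⟨a1, ha1κ⟩, ha2⟩ := hex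
      have hmax : max α₀ a1 < κ.ord := max_lt hα₀κ ha1κ
      refine ⟨max α₀ a1, hmax, ?_⟩
      intro γ hγ
      rcases Finset.mem_insert.1 hγ with rfl | hγ
      · exact lt_of_lt_of_le (Cardinal.lt_ord.2 ha2)
          (Cardinal.ord_le_ord.2 (hlmono (le_max_right _ _) hmax))
      · exact lt_of_lt_of_le (hAll γ hγ)
          (Cardinal.ord_le_ord.2 (hlmono (le_max_left _ _) hmax))
  -- coefficient extraction from (b)
  have auxfb : ∀ α, α < κ.ord → ∀ E : Finset Ordinal, (∀ γ ∈ E, γ < (lam α).ord) →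
      ∀ z : Ordinal → ZMod p, (∑ γ ∈ E, z γ • f α γ) = 0 → ∀ γ ∈ E, z γ = 0 := by
    intro α hα E hE z hz γ hγ
    have hind := linearIndependent_iff'.1 (hfb α hα)
    have hinj : ∀ x ∈ E.attach, ∀ y ∈ E.attach,
        (⟨x.1, hE x.1 x.2⟩ : {γ : Ordinal // γ < (lam α).ord}) = ⟨y.1, hE y.1 y.2⟩ → x = y := by
      intro x _ y _ hxy
      exact Subtype.ext (Subtype.mk_eq_mk.1 hxy)
    have hsum : ∑ i ∈ E.attach.image (fun x => (⟨x.1, hE x.1 x.2⟩ : {γ : Ordinal // γ < (lam α).ord})),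
        z i.1 • f α i.1 = 0 := by
      rw [Finset.sum_image hinj]
      calc ∑ x ∈ E.attach, z x.1 • f α x.1 = ∑ γ ∈ E, z γ • f α γ :=
            Finset.sum_attach E (fun γ => z γ • f α γ)
        _ = 0 := hz
    exact hind _ (fun i => z i.1) hsum ⟨γ, hE γ hγ⟩
      (Finset.mem_image.2 ⟨⟨γ, hγ⟩, Finset.mem_attach _ _, rfl⟩)
  -- Part 1
  have part1 : ∀ (E : Finset Ordinal), (∀ γ ∈ E, γ < lamSup.ord) →
      ∀ (z : Ordinal → ZMod p) (g : G →+ ℤ),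
        ∑ γ ∈ E, z γ • F γ = (Int.castAddHom (ZMod p)).comp g →
        ∑ γ ∈ E, z γ • F γ = 0 := by
    intro E hE z g hEq
    by_contra hne
    have hx : ∃ x : G, (∑ γ ∈ E, z γ • F γ) x ≠ 0 := by
      by_contra hall
      push_neg at hall
      exact hne (AddMonoidHom.ext fun x => by simpa using hall x)
    obtain ⟨x, hx⟩ := hx
    have hxu : x ∈ ⋃ (α : Ordinal) (_ : α < κ.ord), (Gs α : Set G) := by
      rw [hunion]; trivial
    obtain ⟨β, hβκ, hxβ⟩ : ∃ β, β < κ.ord ∧ x ∈ Gs β := by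
      simpa using hxu
    obtain ⟨α₀, hα₀κ, hα₀⟩ := hbound E hE
    -- representation of the restriction of g at level α'+1 for α' ∈ S large
    have levelrep : ∀ α' ∈ S, α₀ ≤ α' → β ≤ α' →
        ∃ c : {q : Ordinal × Ordinal //
            q.1 < (lam (α' + 1)).ord ∧ α' + 1 ≤ q.2 ∧ q.2 < κ.ord} →₀ ℤ,
          (c.sum fun q a => a • h (α' + 1) q.1.1 q.1.2) = g.comp (Gs (α' + 1)).subtype := by
      intro α' hα'S hα₀α' hβα'
      have hα'κ : α' < κ.ord := hSsub _ hα'S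
      have hβ'κ : α' + 1 < κ.ord := hsucc hα'κ
      set g1 : Gs (α' + 1) →+ ℤ := g.comp (Gs (α' + 1)).subtype with hg1def
      have hord : ∀ γ ∈ E, γ < (lam (α' + 1)).ord := fun γ hγ =>
        lt_of_lt_of_le (hα₀ γ hγ)
          (Cardinal.ord_le_ord.2 (hlmono (le_trans hα₀α' (hle1 α')) hβ'κ))
      have hc1 : (Int.castAddHom (ZMod p)).comp g1 = ∑ γ ∈ E, z γ • f (α' + 1) γ := by
        ext y
        have h1 := congrArg (fun φ : G →+ ZMod p => φ (y : G)) hEq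
        simp only [AddMonoidHom.finset_sum_apply, AddMonoidHom.smul_apply,
          AddMonoidHom.comp_apply, Int.coe_castAddHom] at h1 ⊢
        rw [show g1 y = g (y : G) from rfl, ← h1]
        exact Finset.sum_congr rfl fun γ hγ => by rw [hF hβ'κ (hord γ hγ) y]
      have hxmem : x ∈ Gs (α' + 1) := hmono (le_trans hβα' (hle1 α')) hβ'κ hxβ
      have hc2 : (Int.castAddHom (ZMod p)).comp g1 ≠ 0 := by
        intro h0
        apply hx
        have h3 := congrArg (fun φ : Gs (α' + 1) →+ ZMod p =>
          φ (⟨x, hxmem⟩ : Gs (α' + 1))) h0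
        simp only [AddMonoidHom.comp_apply, AddMonoidHom.zero_apply] at h3
        have h2 := congrArg (fun φ : G →+ ZMod p => φ x) hEq
        simp only [AddMonoidHom.comp_apply] at h2
        rw [h2]
        exact h3
      have hc3 : (Int.castAddHom (ZMod p)).comp g1 ∈ Submodule.span (ZMod p)
          (Set.range fun γ : {γ : Ordinal // γ < (lam (α' + 1)).ord} => f (α' + 1) γ.1) := by
        rw [hc1]
        exact Submodule.sum_mem _ fun γ hγ => Submodule.smul_mem _ _
          (Submodule.subset_span ⟨⟨γ, hord γ hγ⟩, rfl⟩)
      have hmem := hff α' hα'S g1 hc3 hc2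
      rw [Finsupp.mem_span_range_iff_exists_finsupp] at hmem
      exact hmem
    obtain ⟨α, hαS, hα⟩ := hSunb (max α₀ β) (max_lt hα₀κ hβκ)
    have hα₀α : α₀ ≤ α := le_trans (le_max_left _ _) hα
    have hβα : β ≤ α := le_trans (le_max_right _ _) hα
    have hακ : α < κ.ord := hSsub _ hαS
    have hβ₁κ : α + 1 < κ.ord := hsucc hακ
    obtain ⟨c, hc⟩ := levelrep α hαS hα₀α hβα
    have hxmem1 : x ∈ Gs (α + 1) := hmono (le_trans hβα (hle1 α)) hβ₁κ hxβ
    have hg1x : (g.comp (Gs (α + 1)).subtype) (⟨x, hxmem1⟩ : Gs (α + 1)) = g x := rfl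
    by_cases hcz : c = 0
    · apply hx
      have hg1 : g.comp (Gs (α + 1)).subtype = 0 := by
        rw [← hc, hcz]; simp
      have hgx : g x = 0 := by
        rw [← hg1x, hg1]; rfl
      have h2 := congrArg (fun φ : G →+ ZMod p => φ x) hEq
      simp only [AddMonoidHom.comp_apply, Int.coe_castAddHom] at h2
      rw [h2, hgx]
      simp
    · obtain ⟨q₀, hq₀⟩ := Finset.nonempty_iff_ne_empty.2
        (fun hemp => hcz (Finsupp.support_eq_empty.1 hemp))
      set δs := c.support.sup (fun q => q.1.2) with hδdef
      have hδκ : δs < κ.ord := by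
        rw [hδdef]
        refine Finset.sup_lt_iff ?_ |>.2 fun q _ => q.2.2.2
        exact hκpos
      obtain ⟨α', hα'S, hα'⟩ := hSunb (max (α + 1) (δs + 1)) (max_lt hβ₁κ (hsucc hδκ))
      have hβ₁α' : α + 1 ≤ α' := le_trans (le_max_left _ _) hα'
      have hδα' : δs + 1 ≤ α' := le_trans (le_max_right _ _) hα'
      have hα'κ : α' < κ.ord := hSsub _ hα'S
      have hβ₂κ : α' + 1 < κ.ord := hsucc hα'κ
      have hβ₁β₂ : α + 1 < α' + 1 := lt_of_le_of_lt hβ₁α' (hlt1 α')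
      have hsub12 : Gs (α + 1) ≤ Gs (α' + 1) := hmono (le_of_lt hβ₁β₂) hβ₂κ
      obtain ⟨d, hd⟩ := levelrep α' hα'S (le_trans hα₀α (le_trans (hle1 α) hβ₁α'))
        (le_trans hβα (le_trans (hle1 α) hβ₁α'))
      set fmap : {q : Ordinal × Ordinal //
            q.1 < (lam (α' + 1)).ord ∧ α' + 1 ≤ q.2 ∧ q.2 < κ.ord} →
          {q : Ordinal × Ordinal //
            q.1 < (lam (α + 1)).ord ∧ α + 1 ≤ q.2 ∧ q.2 < κ.ord} :=
        fun q => if hq : q.1.1 < (lam (α + 1)).ord then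
            ⟨q.1, hq, le_trans (le_of_lt hβ₁β₂) q.2.2.1, q.2.2.2⟩ else q₀ with hfmap
      set l₂ := Finsupp.mapDomain fmap
        (Finsupp.filter (fun q => q.1.1 < (lam (α + 1)).ord) d) with hl₂def
      set V₁ : {q : Ordinal × Ordinal //
          q.1 < (lam (α + 1)).ord ∧ α + 1 ≤ q.2 ∧ q.2 < κ.ord} → (Gs (α + 1) →+ ℤ) :=
        fun q => h (α + 1) q.1.1 q.1.2 with hV₁
      have hAc : Finsupp.linearCombination ℤ V₁ c = g.comp (Gs (α + 1)).subtype := by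
        rw [Finsupp.linearCombination_apply]; exact hc
      have hAl : Finsupp.linearCombination ℤ V₁ l₂ = g.comp (Gs (α + 1)).subtype := by
        rw [hl₂def, Finsupp.linearCombination_mapDomain]
        have hrest : ∀ y : Gs (α + 1), (g.comp (Gs (α + 1)).subtype) y =
            ∑ q ∈ d.support, d q •
              (h (α' + 1) q.1.1 q.1.2) (AddSubgroup.inclusion hsub12 y) := by
          intro y
          have h4 := congrArg (fun φ : Gs (α' + 1) →+ ℤ =>
            φ (AddSubgroup.inclusion hsub12 y)) hd
          simp only [Finsupp.sum, AddMonoidHom.finset_sum_apply,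
            AddMonoidHom.smul_apply] at h4
          exact h4.symm
        ext y
        rw [Finsupp.linearCombination_apply]
        simp only [Finsupp.sum, Finsupp.support_filter, Finsupp.filter_apply,
          Function.comp, AddMonoidHom.finset_sum_apply, AddMonoidHom.smul_apply]
        rw [hrest y, ← Finset.sum_filter_add_sum_filter_not d.support
          (fun q => q.1.1 < (lam (α + 1)).ord)
          (fun q => d q • (h (α' + 1) q.1.1 q.1.2) (AddSubgroup.inclusion hsub12 y))]
        have hzero : ∑ q ∈ d.support.filter (fun q => ¬ q.1.1 < (lam (α + 1)).ord),
            d q • (h (α' + 1) q.1.1 q.1.2) (AddSubgroup.inclusion hsub12 y) = 0 := by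
          refine Finset.sum_eq_zero fun q hq => ?_
          obtain ⟨hqs, hnP⟩ := Finset.mem_filter.1 hq
          have h0 := (hfg hsub12 (le_of_lt hβ₁β₂) hβ₂κ (not_lt.1 hnP) q.2.1).2
            q.1.2 q.2.2.1 q.2.2.2
          have h5 := congrArg (fun φ : Gs (α + 1) →+ ℤ => φ y) h0
          simp only [AddMonoidHom.comp_apply, AddMonoidHom.zero_apply] at h5
          rw [h5, smul_zero]
        rw [hzero, add_zero]
        refine Finset.sum_congr rfl fun q hq => ?_
        obtain ⟨hqs, hP⟩ := Finset.mem_filter.1 hq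
        rw [if_pos hP]
        have h6 := hfd hsub12 hβ₁β₂ q.2.2.1 q.2.2.2 hP
        have h7 := congrArg (fun φ : Gs (α + 1) →+ ℤ => φ y) h6
        simp only [AddMonoidHom.comp_apply] at h7
        have h8 : fmap q = ⟨q.1, hP, le_trans (le_of_lt hβ₁β₂) q.2.2.1, q.2.2.2⟩ := by
          rw [hfmap]; exact dif_pos hP
        rw [h8, hV₁]
        rw [← h7]
      have hzero2 : Finsupp.linearCombination ℤ V₁ (c - l₂) = 0 := by
        rw [map_sub, hAc, hAl, sub_self]
      have hceq : c = l₂ := sub_eq_zero.1 (linearIndependent_iff.1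
        (hfe (α + 1) hβ₁κ) _ hzero2)
      have hq₀2 : q₀.1.2 < α' + 1 :=
        lt_of_le_of_lt (lt_of_le_of_lt (Finset.le_sup (f := fun q => q.1.2) hq₀)
          (hlt1 δs)).le (lt_of_le_of_lt hδα' (hlt1 α'))
      have hl₂q₀ : l₂ q₀ = 0 := by
        by_contra hne0
        have hq₀l : q₀ ∈ l₂.support := Finsupp.mem_support_iff.2 hne0
        rw [hl₂def] at hq₀l
        obtain ⟨q', hq', heq⟩ := Finset.mem_image.1 (Finsupp.mapDomain_support hq₀l)
        have hPq' : q'.1.1 < (lam (α + 1)).ord := by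
          rw [Finsupp.support_filter] at hq'
          exact (Finset.mem_filter.1 hq').2
        have h9 : fmap q' = ⟨q'.1, hPq', le_trans (le_of_lt hβ₁β₂) q'.2.2.1, q'.2.2.2⟩ := by
          rw [hfmap]; exact dif_pos hPq'
        have h10 : (α' + 1 : Ordinal) ≤ q₀.1.2 := by
          rw [← heq, h9]
          exact q'.2.2.1
        exact absurd hq₀2 (not_lt.2 h10)
      exact absurd (hceq ▸ hl₂q₀) (Finsupp.mem_support_iff.1 hq₀)
  refine ⟨part1, ?_⟩
  rw [linearIndependent_iff']
  intro s w hsum i hi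
  have hmk : (∑ j ∈ s, w j • F j.1) ∈ phiPRange p G := by
    rw [← Submodule.Quotient.mk_eq_zero, ← hsum]
    simp only [← Submodule.mkQ_apply, map_sum, map_smul]
  obtain ⟨g, hg⟩ := hmk
  set E := s.image (fun i => i.1) with hEdef
  set z : Ordinal → ZMod p := fun γ => if h : γ < lamSup.ord then w ⟨γ, h⟩ else 0 with hzdef
  have hEsum : ∑ γ ∈ E, z γ • F γ = ∑ j ∈ s, w j • F j.1 := by
    rw [hEdef, Finset.sum_image (fun a _ b _ hab => Subtype.ext hab)]
    refine Finset.sum_congr rfl fun j _ => ?_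
    rw [hzdef]
    simp only [j.2, dif_pos, Subtype.coe_eta]
  have hEbd : ∀ γ ∈ E, γ < lamSup.ord := by
    intro γ hγ
    obtain ⟨j, _, rfl⟩ := Finset.mem_image.1 hγ
    exact j.2
  have h0 : ∑ γ ∈ E, z γ • F γ = 0 := by
    refine part1 E hEbd z g ?_
    rw [hEsum, ← hg]
    rfl
  obtain ⟨α₀, hα₀κ, hα₀⟩ := hbound E hEbd
  have hres : ∑ γ ∈ E, z γ • f α₀ γ = 0 := by
    ext y
    have h1 := congrArg (fun φ : G →+ ZMod p => φ (y : G)) h0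
    simp only [AddMonoidHom.finset_sum_apply, AddMonoidHom.smul_apply,
      AddMonoidHom.zero_apply] at h1 ⊢
    rw [← h1]
    exact Finset.sum_congr rfl fun γ hγ => by rw [hF hα₀κ (hα₀ γ hγ) y]
  have hz0 := auxfb α₀ hα₀κ E hα₀ z hres i.1 (Finset.mem_image_of_mem _ hi)
  rw [hzdef] at hz0
  simpa only [i.2, dif_pos, Subtype.coe_eta] using hz0
end

section
/- Let p be a prime, κ a regular uncountable cardinal, (G_α)_{α<κ} an increasing continuous chain of abelian groups with union G, and (λ_α)_{α<κ} a nondecreasing continuous sequence of cardinals with supremum λ. Suppose there are homomorphisms f_γ^α : G_α → ℤ/pℤ (γ < λ_α) such that: (a) f_γ^β restricted to G_α equals f_γ^α for α ≤ β, γ < λ_α; (b) for each α the family (f_γ^α)_{γ<λ_α} is linearly independent; (c) if α ≤ β and λ_α ≤ γ < λ_β then f_γ^β restricted to G_α is zero. Suppose further that for each α there is a direct sum decomposition Hom(G_α, ℤ/pℤ) = L_p^α ⊕ K_p^α of ℤ/pℤ-vector spaces, where L_p^α is the span of {f_γ^α : γ < λ_α}, together with a basis B_p^α of K_p^α and a function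 T_α : B_p^α → Hom(G_α, ℤ) such that: (d) for f ∈ K_p^β and α < β, the restriction of f to G_α lies in K_p^α, and for f ∈ B_p^β the restriction of f to G_α lies in B_p^α; (e) for each b ∈ B_p^α, the composition of T_α(b) with the reduction ℤ → ℤ/pℤ equals b; (f) for α < β and f ∈ B_p^β, T_α(f restricted to G_α) = T_β(f) restricted to G_α. Define f_γ : G → ℤ/pℤ by f_γ = ⋃{f_γ^α : γ < λ_α}. Then for every g ∈ Hom(G, ℤ/pℤ) there exist a finite set E ⊆ λ, coefficients z_γ ∈ ℤ/pℤ (γ ∈ E), and h ∈ Hom(G,ℤ) such that g − Σ_{γ∈E} z_γ f_γ equals the composition of h with the reduction ℤ → ℤ/pℤ; that is, the classes of {f_γ : γ < λ} generate Hom(G,ℤ/pℤ)/φ^p(Hom(G,ℤ)). -/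
universe u2 in
private lemma my_card_bound {G : Type} [AddCommGroup G] (p : ℕ) (c : Cardinal.{u2})
    (H : AddSubgroup G) (ff : {γ : Ordinal.{u2} // γ < c.ord} → (H →+ ZMod p))
    (hinj : Function.Injective ff) :
    c ≤ Cardinal.lift.{u2, 0} (Cardinal.mk (G → ZMod p)) := by
  classical
  have hemb2 : Function.Injective (fun (φ : H →+ ZMod p) (x : G) =>
      if h : x ∈ H then φ ⟨x, h⟩ else 0) := by
    intro φ₁ φ₂ hequ
    ext ⟨x, hx⟩
    have := congrFun hequ x
    simpa [hx] using this
  have h1 : Cardinal.lift.{0} (Cardinal.mk {γ : Ordinal.{u2} // γ < c.ord})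
      ≤ Cardinal.lift.{u2+1} (Cardinal.mk (G → ZMod p)) :=
    Cardinal.lift_mk_le'.mpr ⟨⟨_, hemb2.comp hinj⟩⟩
  rw [show (Cardinal.mk {γ : Ordinal.{u2} // γ < c.ord})
      = Cardinal.mk (Set.Iio c.ord) from rfl] at h1
  rw [Ordinal.mk_Iio_ordinal, Cardinal.lift_uzero, Cardinal.card_ord] at h1
  rw [show Cardinal.lift.{u2+1,0} (Cardinal.mk (G → ZMod p))
      = Cardinal.lift.{u2+1,u2} (Cardinal.lift.{u2,0} (Cardinal.mk (G → ZMod p))) by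
    rw [Cardinal.lift_lift]] at h1
  exact Cardinal.lift_le.mp h1

private lemma my_stab_aux {κ : Cardinal} (hreg : κ.IsRegular) (hunc : Cardinal.aleph0 < κ)
    (m : (α : Ordinal) → α < κ.ord → ℕ)
    (hm : ∀ {α β : Ordinal} (hα : α < κ.ord) (hβ : β < κ.ord), α ≤ β → m α hα ≤ m β hβ) :
    ∃ (α₀ : Ordinal) (hα₀ : α₀ < κ.ord), ∀ β (hβ : β < κ.ord), α₀ ≤ β → m β hβ = m α₀ hα₀ := by
  by_contra hcon
  push_neg at hcon
  have hpos : (0 : Ordinal) < κ.ord := by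
    have := Cardinal.ord_lt_ord.2 hreg.pos
    simpa using this
  have step : ∀ a : {α : Ordinal // α < κ.ord}, ∃ b : {α : Ordinal // α < κ.ord},
      a.1 ≤ b.1 ∧ m a.1 a.2 < m b.1 b.2 := by
    intro a
    obtain ⟨β, hβ, hle, hne⟩ := hcon a.1 a.2
    exact ⟨⟨β, hβ⟩, hle, lt_of_le_of_ne (hm a.2 hβ hle) (Ne.symm hne)⟩
  choose stepf _hle hlt using step
  set seq : ℕ → {α : Ordinal // α < κ.ord} := fun n => stepf^[n] ⟨0, hpos⟩ with hseq
  have hsucc : ∀ n, seq (n + 1) = stepf (seq n) := by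
    intro n; simp [hseq, Function.iterate_succ_apply']
  have hgrow : ∀ n, n ≤ m (seq n).1 (seq n).2 := by
    intro n
    induction n with
    | zero => exact Nat.zero_le _
    | succ k ih =>
      have := hlt (seq k)
      rw [← hsucc k] at this
      omega
  have hδ : (⨆ n, (seq n).1) < κ.ord :=
    Cardinal.iSup_lt_ord_lift_of_isRegular hreg (by simpa using hunc) (fun n => (seq n).2)
  have hub : ∀ n, (seq n).1 ≤ ⨆ n, (seq n).1 := fun n => Ordinal.le_iSup (fun n => (seq n).1) n
  have hcontr : ∀ n, n ≤ m _ hδ := fun n => (hgrow n).trans (hm (seq n).2 hδ (hub n))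
  have := hcontr (m _ hδ + 1)
  omega



/-- Shelah–Strüngmann: given an increasing continuous chain `(G_α)_{α<κ.ord}`
of subgroups of `G` (`κ` regular uncountable) with union `G`, a nondecreasing
continuous sequence of cardinals `(λ_α)` with supremum `λ`, compatible linearly
independent homomorphisms `f_γ^α : G_α → ℤ/pℤ` spanning `L_p^α`, together with
complements `K_p^α` (so `Hom(G_α,ℤ/pℤ) = L_p^α ⊕ K_p^α`), bases `B_p^α` of
`K_p^α`, and lifting functions `T_α : B_p^α → Hom(G_α,ℤ)` satisfying (d)–(f),
every `g ∈ Hom(G,ℤ/pℤ)` differs from a finite linear combination of the union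
homomorphisms `f_γ : G → ℤ/pℤ` (`γ < λ`) by an element of the image of
`Hom(G,ℤ)` under reduction mod `p`; that is, the classes of the `f_γ` generate
`Hom(G,ℤ/pℤ)/φ^p(Hom(G,ℤ))`. -/
theorem classes_generate_quotient (p : ℕ) (hp : p.Prime)
    (κ : Cardinal) (hreg : κ.IsRegular) (hunc : Cardinal.aleph0 < κ)
    (G : Type) [AddCommGroup G]
    (Gs : Ordinal → AddSubgroup G)
    (hmono : ∀ {α β : Ordinal}, α ≤ β → β < κ.ord → Gs α ≤ Gs β)
    (hcont : ∀ δ < κ.ord, Order.IsSuccLimit δ →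
      (Gs δ : Set G) = ⋃ (α : Ordinal) (_ : α < δ), (Gs α : Set G))
    (hunion : (⋃ (α : Ordinal) (_ : α < κ.ord), (Gs α : Set G)) = Set.univ)
    (lam : Ordinal → Cardinal)
    (hlmono : ∀ {α β : Ordinal}, α ≤ β → β < κ.ord → lam α ≤ lam β)
    (hlcont : ∀ δ < κ.ord, Order.IsSuccLimit δ →
      lam δ = ⨆ α : {α : Ordinal // α < δ}, lam α.1)
    (lamSup : Cardinal)
    (hsup : lamSup = ⨆ α : {α : Ordinal // α < κ.ord}, lam α.1)
    (f : (α : Ordinal) → Ordinal → (Gs α →+ ZMod p))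
    -- (a) compatibility of the `f`'s under restriction
    (hfa : ∀ {α β γ : Ordinal} (hsub : Gs α ≤ Gs β), α ≤ β → β < κ.ord →
      γ < (lam α).ord → (f β γ).comp (AddSubgroup.inclusion hsub) = f α γ)
    -- (b) linear independence of the `f`'s at each level
    (hfb : ∀ α < κ.ord, LinearIndependent (ZMod p)
      (fun γ : {γ : Ordinal // γ < (lam α).ord} => f α γ.1))
    -- (c) new `f`'s vanish on old groups
    (hfc : ∀ {α β γ : Ordinal} (hsub : Gs α ≤ Gs β), α ≤ β → β < κ.ord →
      (lam α).ord ≤ γ → γ < (lam β).ord →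
      (f β γ).comp (AddSubgroup.inclusion hsub) = 0)
    -- the complements `K_p^α`: `Hom(G_α, ℤ/pℤ) = L_p^α ⊕ K_p^α` with
    -- `L_p^α` the span of the `f_γ^α`, `γ < λ_α`
    (K : (α : Ordinal) → Submodule (ZMod p) (Gs α →+ ZMod p))
    (hdecomp : ∀ α < κ.ord,
      IsCompl (Submodule.span (ZMod p)
        (Set.range fun γ : {γ : Ordinal // γ < (lam α).ord} => f α γ.1)) (K α))
    -- the bases `B_p^α` of `K_p^α`
    (B : (α : Ordinal) → Set (Gs α →+ ZMod p))
    (hBsub : ∀ α < κ.ord, B α ⊆ (K α : Set (Gs α →+ ZMod p)))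
    (hBind : ∀ α < κ.ord, LinearIndependent (ZMod p)
      (fun b : B α => (b : Gs α →+ ZMod p)))
    (hBspan : ∀ α < κ.ord, Submodule.span (ZMod p) (B α) = K α)
    -- the lifting functions `T_α`
    (T : (α : Ordinal) → (Gs α →+ ZMod p) → (Gs α →+ ℤ))
    -- (d) restrictions map `K_p^β` into `K_p^α` and `B_p^β` into `B_p^α`
    (hfd : ∀ {α β : Ordinal} (hsub : Gs α ≤ Gs β), α < β → β < κ.ord →
      (∀ g ∈ K β, g.comp (AddSubgroup.inclusion hsub) ∈ K α) ∧
      (∀ g ∈ B β, g.comp (AddSubgroup.inclusion hsub) ∈ B α))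
    -- (e) `T_α` lifts the elements of `B_p^α` along `ℤ → ℤ/pℤ`
    (hfe : ∀ α < κ.ord, ∀ b ∈ B α,
      (Int.castAddHom (ZMod p)).comp (T α b) = b)
    -- (f) the liftings are compatible under restriction
    (hff : ∀ {α β : Ordinal} (hsub : Gs α ≤ Gs β), α < β → β < κ.ord →
      ∀ g ∈ B β, T α (g.comp (AddSubgroup.inclusion hsub)) =
        (T β g).comp (AddSubgroup.inclusion hsub))
    -- the union homomorphisms `f_γ = ⋃ {f_γ^α : γ < λ_α}`
    (F : Ordinal → (G →+ ZMod p))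
    (hF : ∀ {α γ : Ordinal}, α < κ.ord → γ < (lam α).ord →
      ∀ x : Gs α, F γ ↑x = f α γ x) :
    ∀ g : G →+ ZMod p, ∃ (E : Finset Ordinal) (z : Ordinal → ZMod p)
      (h : G →+ ℤ), (∀ γ ∈ E, γ < lamSup.ord) ∧
        g - ∑ γ ∈ E, z γ • F γ = (Int.castAddHom (ZMod p)).comp h := by
  intro g
  classical
  haveI : Fact p.Prime := ⟨hp⟩
  haveI : NeZero p := ⟨hp.ne_zero⟩
  -- every element of G lies in some G_α
  have hdirx : ∀ x : G, ∃ α, α < κ.ord ∧ x ∈ Gs α := by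
    intro x
    have hx : x ∈ ⋃ (α : Ordinal) (_ : α < κ.ord), (Gs α : Set G) := by
      rw [hunion]; trivial
    simpa using hx
  choose idx hidxlt hidxmem using hdirx
  -- pushing sums of homomorphisms through composition with the inclusion
  have hsum_comp_z : ∀ (α β : Ordinal) (hsub : Gs α ≤ Gs β) (w : Ordinal →₀ ZMod p)
      (φ : Ordinal → ZMod p → (Gs β →+ ZMod p)),
      (w.sum φ).comp (AddSubgroup.inclusion hsub)
        = w.sum (fun γ a => (φ γ a).comp (AddSubgroup.inclusion hsub)) := by
    intro α β hsub w φ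
    rw [Finsupp.sum, Finsupp.sum]
    ext x
    simp [AddMonoidHom.finset_sum_apply]
  have hsum_comp_c : ∀ (α β : Ordinal) (hsub : Gs α ≤ Gs β) (w : ↥(B β) →₀ ZMod p)
      (φ : ↥(B β) → ZMod p → (Gs β →+ ZMod p)),
      (w.sum φ).comp (AddSubgroup.inclusion hsub)
        = w.sum (fun b a => (φ b a).comp (AddSubgroup.inclusion hsub)) := by
    intro α β hsub w φ
    rw [Finsupp.sum, Finsupp.sum]
    ext x
    simp [AddMonoidHom.finset_sum_apply]
  have hsum_comp_int : ∀ (α β : Ordinal) (hsub : Gs α ≤ Gs β) (w : ↥(B β) →₀ ZMod p)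
      (φ : ↥(B β) → ZMod p → (Gs β →+ ℤ)),
      (w.sum φ).comp (AddSubgroup.inclusion hsub)
        = w.sum (fun b a => (φ b a).comp (AddSubgroup.inclusion hsub)) := by
    intro α β hsub w φ
    rw [Finsupp.sum, Finsupp.sum]
    ext x
    simp [AddMonoidHom.finset_sum_apply]
  -- membership of the two kinds of sums in the two pieces of the decomposition
  have hLmem : ∀ (α : Ordinal) (hα : α < κ.ord) (w : Ordinal →₀ ZMod p),
      (∀ γ ∈ w.support, γ < (lam α).ord) →
      (w.sum fun γ a => a • f α γ) ∈ Submodule.span (ZMod p)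
        (Set.range fun γ : {γ : Ordinal // γ < (lam α).ord} => f α γ.1) := by
    intro α hα w hw
    refine Submodule.sum_mem _ (fun γ hγ => Submodule.smul_mem _ _ ?_)
    exact Submodule.subset_span ⟨⟨γ, hw γ hγ⟩, rfl⟩
  have hKmem : ∀ (α : Ordinal) (hα : α < κ.ord) (w : ↥(B α) →₀ ZMod p),
      (w.sum fun b a => a • (b : Gs α →+ ZMod p)) ∈ K α := by
    intro α hα w
    refine Submodule.sum_mem _ (fun b hb => Submodule.smul_mem _ _ ?_)
    rw [← hBspan α hα]
    exact Submodule.subset_span b.2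
  -- vanishing sums have zero coefficients
  have hzzero : ∀ (α : Ordinal) (hα : α < κ.ord) (w : Ordinal →₀ ZMod p),
      (∀ γ ∈ w.support, γ < (lam α).ord) →
      (w.sum fun γ a => a • f α γ) = 0 → w = 0 := by
    intro α hα w hw h0
    have hind := hfb α hα
    rw [linearIndependent_iff] at hind
    have h2 := hind (w.subtypeDomain (fun γ => γ < (lam α).ord))
      (by
        rw [Finsupp.linearCombination_apply]
        exact (Finsupp.sum_subtypeDomain_index (h := fun γ a => a • f α γ) hw).trans h0)
    exact (Finsupp.subtypeDomain_eq_zero_iff hw).mp h2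
  have hczero : ∀ (α : Ordinal) (hα : α < κ.ord) (w : ↥(B α) →₀ ZMod p),
      (w.sum fun b a => a • (b : Gs α →+ ZMod p)) = 0 → w = 0 := by
    intro α hα w h0
    have hind := hBind α hα
    rw [linearIndependent_iff] at hind
    exact hind w (by rw [Finsupp.linearCombination_apply]; exact h0)
  -- uniqueness of representations
  have huniq : ∀ (α : Ordinal) (hα : α < κ.ord) (zc₁ zc₂ : Ordinal →₀ ZMod p)
      (cc₁ cc₂ : ↥(B α) →₀ ZMod p),
      (∀ γ ∈ zc₁.support, γ < (lam α).ord) → (∀ γ ∈ zc₂.support, γ < (lam α).ord) →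
      zc₁.sum (fun γ a => a • f α γ) + cc₁.sum (fun b a => a • (b : Gs α →+ ZMod p)) =
        zc₂.sum (fun γ a => a • f α γ) + cc₂.sum (fun b a => a • (b : Gs α →+ ZMod p)) →
      zc₁ = zc₂ ∧ cc₁ = cc₂ := by
    intro α hα zc₁ zc₂ cc₁ cc₂ h₁ h₂ heq
    have hzsub : ((zc₁ - zc₂).sum fun γ a => a • f α γ)
        = zc₁.sum (fun γ a => a • f α γ) - zc₂.sum (fun γ a => a • f α γ) :=
      Finsupp.sum_sub_index (fun a b₁ b₂ => sub_smul _ _ _)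
    have hcsub : ((cc₂ - cc₁).sum fun b a => a • (b : Gs α →+ ZMod p))
        = cc₂.sum (fun b a => a • (b : Gs α →+ ZMod p))
          - cc₁.sum (fun b a => a • (b : Gs α →+ ZMod p)) :=
      Finsupp.sum_sub_index (fun a b₁ b₂ => sub_smul _ _ _)
    have hdiff : ((zc₁ - zc₂).sum fun γ a => a • f α γ)
        = ((cc₂ - cc₁).sum fun b a => a • (b : Gs α →+ ZMod p)) := by
      rw [hzsub, hcsub, sub_eq_sub_iff_add_eq_add, heq, add_comm]
    have hsupp12 : ∀ γ ∈ (zc₁ - zc₂).support, γ < (lam α).ord := by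
      intro γ hγ
      by_contra hcon
      have e₁ : zc₁ γ = 0 := by
        by_contra hne; exact hcon (h₁ γ (Finsupp.mem_support_iff.2 hne))
      have e₂ : zc₂ γ = 0 := by
        by_contra hne; exact hcon (h₂ γ (Finsupp.mem_support_iff.2 hne))
      have : (zc₁ - zc₂) γ = 0 := by rw [Finsupp.sub_apply, e₁, e₂, sub_zero]
      exact Finsupp.mem_support_iff.1 hγ this
    have hmemL := hLmem α hα (zc₁ - zc₂) hsupp12
    have hmemK : ((zc₁ - zc₂).sum fun γ a => a • f α γ) ∈ K α := by
      rw [hdiff]; exact hKmem α hα _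
    have hzero : ((zc₁ - zc₂).sum fun γ a => a • f α γ) = 0 := by
      have hdis := (hdecomp α hα).disjoint
      rw [Submodule.disjoint_def] at hdis
      exact hdis _ hmemL hmemK
    have hzc : zc₁ = zc₂ := sub_eq_zero.mp (hzzero α hα _ hsupp12 hzero)
    refine ⟨hzc, ?_⟩
    have hczero' : ((cc₂ - cc₁).sum fun b a => a • (b : Gs α →+ ZMod p)) = 0 := by
      rw [← hdiff, hzero]
    exact (sub_eq_zero.mp (hczero α hα _ hczero')).symm
  -- existence of representations
  have hrep : ∀ (α : Ordinal) (hα : α < κ.ord), ∃ (zcw : Ordinal →₀ ZMod p)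
      (ccw : ↥(B α) →₀ ZMod p),
      (∀ γ ∈ zcw.support, γ < (lam α).ord) ∧
      g.comp (Gs α).subtype = zcw.sum (fun γ a => a • f α γ)
        + ccw.sum (fun b a => a • (b : Gs α →+ ZMod p)) := by
    intro α hα
    have hx : g.comp (Gs α).subtype ∈ (Submodule.span (ZMod p)
        (Set.range fun γ : {γ : Ordinal // γ < (lam α).ord} => f α γ.1) ⊔ K α) := by
      rw [(hdecomp α hα).sup_eq_top]; exact Submodule.mem_top
    obtain ⟨l, hl, k, hk, hlk⟩ := Submodule.mem_sup.mp hx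
    obtain ⟨c, hc⟩ := Finsupp.mem_span_range_iff_exists_finsupp.mp hl
    have hk' : k ∈ Submodule.span (ZMod p)
        (Set.range fun b : ↥(B α) => (b : Gs α →+ ZMod p)) := by
      have hr : (Set.range fun b : ↥(B α) => (b : Gs α →+ ZMod p)) = B α :=
        Subtype.range_coe
      rw [hr, hBspan α hα]
      exact hk
    obtain ⟨c', hc'⟩ := Finsupp.mem_span_range_iff_exists_finsupp.mp hk'
    refine ⟨c.embDomain ⟨Subtype.val, Subtype.val_injective⟩, c', ?_, ?_⟩
    · intro γ hγ
      rw [Finsupp.support_embDomain, Finset.mem_map] at hγ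
      obtain ⟨⟨γ', hγ'⟩, -, rfl⟩ := hγ
      exact hγ'
    · rw [Finsupp.sum_embDomain]
      rw [show (c.sum fun a b => b • f α ((⟨Subtype.val, Subtype.val_injective⟩ :
        {γ : Ordinal // γ < (lam α).ord} ↪ Ordinal) a)) = c.sum fun i a => a • f α i.1 from rfl]
      rw [hc, hc', hlk]
  choose zc cc hzsupp hgeq using hrep
  -- compatibility of the chosen representations along the chain
  have hcompat : ∀ (α β : Ordinal) (hαβ : α < β) (hβ : β < κ.ord),
      zc α (hαβ.trans hβ) = (zc β hβ).filter (fun γ => γ < (lam α).ord) ∧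
      cc α (hαβ.trans hβ) = Finsupp.mapDomain
        (fun b : ↥(B β) => (⟨(b : Gs β →+ ZMod p).comp
            (AddSubgroup.inclusion (hmono hαβ.le hβ)),
          (hfd (hmono hαβ.le hβ) hαβ hβ).2 _ b.2⟩ : ↥(B α))) (cc β hβ) := by
    intro α β hαβ hβ
    have hα : α < κ.ord := hαβ.trans hβ
    have h1 : g.comp (Gs α).subtype =
        ((zc β hβ).sum fun γ a => a • f β γ).comp (AddSubgroup.inclusion (hmono hαβ.le hβ))
        + ((cc β hβ).sum fun b a => a • (b : Gs β →+ ZMod p)).comp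
            (AddSubgroup.inclusion (hmono hαβ.le hβ)) := by
      have h0 : g.comp (Gs α).subtype
          = (g.comp (Gs β).subtype).comp (AddSubgroup.inclusion (hmono hαβ.le hβ)) := by
        ext x; rfl
      rw [h0, hgeq β hβ, AddMonoidHom.add_comp]
    have h2 : ((zc β hβ).sum fun γ a => a • f β γ).comp
        (AddSubgroup.inclusion (hmono hαβ.le hβ))
        = ((zc β hβ).filter fun γ => γ < (lam α).ord).sum fun γ a => a • f α γ := by
      rw [hsum_comp_z α β (hmono hαβ.le hβ)]
      rw [Finsupp.sum, Finsupp.sum, Finsupp.support_filter, Finset.sum_filter]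
      refine Finset.sum_congr rfl (fun γ hγ => ?_)
      by_cases hpred : γ < (lam α).ord
      · rw [if_pos hpred, Finsupp.filter_apply, if_pos hpred]
        show zc β hβ γ • (f β γ).comp (AddSubgroup.inclusion (hmono hαβ.le hβ)) = _
        rw [hfa (hmono hαβ.le hβ) hαβ.le hβ hpred]
      · rw [if_neg hpred]
        have hgl : γ < (lam β).ord := hzsupp β hβ γ hγ
        show zc β hβ γ • (f β γ).comp (AddSubgroup.inclusion (hmono hαβ.le hβ)) = 0
        rw [hfc (hmono hαβ.le hβ) hαβ.le hβ (not_lt.mp hpred) hgl, smul_zero]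
    have h3 : ((cc β hβ).sum fun b a => a • (b : Gs β →+ ZMod p)).comp
        (AddSubgroup.inclusion (hmono hαβ.le hβ))
        = (Finsupp.mapDomain (fun b : ↥(B β) => (⟨(b : Gs β →+ ZMod p).comp
            (AddSubgroup.inclusion (hmono hαβ.le hβ)),
            (hfd (hmono hαβ.le hβ) hαβ hβ).2 _ b.2⟩ : ↥(B α)))
            (cc β hβ)).sum fun b a => a • (b : Gs α →+ ZMod p) := by
      refine Eq.trans ?_ (Finsupp.sum_mapDomain_index
          (h := fun (b : ↥(B α)) a => a • (b : Gs α →+ ZMod p))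
          (fun b => zero_smul _ _) (fun b m₁ m₂ => add_smul _ _ _)).symm
      rw [hsum_comp_c α β (hmono hαβ.le hβ)]
      rfl
    have h4 : ∀ γ ∈ ((zc β hβ).filter fun γ => γ < (lam α).ord).support, γ < (lam α).ord := by
      rw [Finsupp.support_filter]
      intro γ hγ
      exact (Finset.mem_filter.mp hγ).2
    exact huniq α hα _ _ _ _ (hzsupp α hα) h4
      ((hgeq α hα).symm.trans (h1.trans (by rw [h2, h3])))
  -- the two cardinality functions and their monotonicity
  have hm1mono : ∀ {α β : Ordinal} (hα : α < κ.ord) (hβ : β < κ.ord), α ≤ β →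
      (zc α hα).support.card ≤ (zc β hβ).support.card := by
    intro α β hα hβ hle
    rcases eq_or_lt_of_le hle with rfl | hlt
    · exact le_rfl
    · have hc : zc α hα = (zc β hβ).filter (fun γ => γ < (lam α).ord) :=
        (hcompat α β hlt hβ).1
      rw [hc, Finsupp.support_filter]
      exact Finset.card_le_card (Finset.filter_subset _ _)
  have hm2mono : ∀ {α β : Ordinal} (hα : α < κ.ord) (hβ : β < κ.ord), α ≤ β →
      (cc α hα).support.card ≤ (cc β hβ).support.card := by
    intro α β hα hβ hle
    rcases eq_or_lt_of_le hle with rfl | hlt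
    · exact le_rfl
    · have hc : cc α hα = Finsupp.mapDomain
          (fun b : ↥(B β) => (⟨(b : Gs β →+ ZMod p).comp
              (AddSubgroup.inclusion (hmono hlt.le hβ)),
            (hfd (hmono hlt.le hβ) hlt hβ).2 _ b.2⟩ : ↥(B α))) (cc β hβ) :=
        (hcompat α β hlt hβ).2
      rw [hc]
      exact (Finset.card_le_card Finsupp.mapDomain_support).trans Finset.card_image_le
  -- stabilization
  obtain ⟨αs, hαs, hstab⟩ := my_stab_aux hreg hunc
    (fun α hα => (zc α hα).support.card + (cc α hα).support.card)
    (fun hα hβ hle => Nat.add_le_add (hm1mono hα hβ hle) (hm2mono hα hβ hle))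
  have hm1stab : ∀ (β : Ordinal) (hβ : β < κ.ord), αs ≤ β →
      (zc β hβ).support.card = (zc αs hαs).support.card := by
    intro β hβ hle
    have h1 := hm1mono hαs hβ hle
    have h2 := hm2mono hαs hβ hle
    have h3 := hstab β hβ hle
    omega
  have hm2stab : ∀ (β : Ordinal) (hβ : β < κ.ord), αs ≤ β →
      (cc β hβ).support.card = (cc αs hαs).support.card := by
    intro β hβ hle
    have h1 := hm1mono hαs hβ hle
    have h2 := hm2mono hαs hβ hle
    have h3 := hstab β hβ hle
    omega
  -- the zc's stabilize completely
  have hzstab : ∀ (β : Ordinal) (hβ : β < κ.ord), αs ≤ β → zc β hβ = zc αs hαs := by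
    intro β hβ hle
    rcases eq_or_lt_of_le hle with rfl | hlt
    · rfl
    · have hc : zc αs hαs = (zc β hβ).filter (fun γ => γ < (lam αs).ord) :=
        (hcompat αs β hlt hβ).1
      have hcard2 : ((zc β hβ).filter fun γ => γ < (lam αs).ord).support.card
          = (zc β hβ).support.card := by
        rw [← hc]
        exact (hm1stab β hβ hle).symm
      have hsupp_eq : ((zc β hβ).filter fun γ => γ < (lam αs).ord).support
          = (zc β hβ).support := by
        refine Finset.eq_of_subset_of_card_le ?_ (le_of_eq hcard2.symm)
        rw [Finsupp.support_filter]
        exact Finset.filter_subset _ _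
      have hpred : ∀ γ ∈ (zc β hβ).support, γ < (lam αs).ord := by
        intro γ hγ
        rw [← hsupp_eq, Finsupp.support_filter] at hγ
        exact (Finset.mem_filter.mp hγ).2
      have hfilter_self : (zc β hβ).filter (fun γ => γ < (lam αs).ord) = zc β hβ := by
        ext γ
        rw [Finsupp.filter_apply]
        split_ifs with h
        · rfl
        · by_cases h0 : zc β hβ γ = 0
          · rw [h0]
          · exact absurd (hpred γ (Finsupp.mem_support_iff.2 h0)) h
      rw [hc, hfilter_self]
  -- compatibility of the integral lifts
  have hU : ∀ (α β : Ordinal) (hα : α < κ.ord) (hβ : β < κ.ord), αs ≤ α → ∀ (hαβ : α < β),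
      ((cc β hβ).sum fun b a => ((a.val : ℤ)) • T β (b : Gs β →+ ZMod p)).comp
          (AddSubgroup.inclusion (hmono hαβ.le hβ))
        = ((cc α hα).sum fun b a => ((a.val : ℤ)) • T α (b : Gs α →+ ZMod p)) := by
    intro α β hα hβ hge hαβ
    set rb : ↥(B β) → ↥(B α) := fun b => (⟨(b : Gs β →+ ZMod p).comp
        (AddSubgroup.inclusion (hmono hαβ.le hβ)),
      (hfd (hmono hαβ.le hβ) hαβ hβ).2 _ b.2⟩ : ↥(B α)) with hrbdef
    have hc' : cc α hα = Finsupp.mapDomain rb (cc β hβ) := (hcompat α β hαβ hβ).2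
    have hsupp_sub : (cc α hα).support ⊆ (cc β hβ).support.image rb := by
      rw [hc']
      exact Finsupp.mapDomain_support
    have hcard_eq : (cc α hα).support.card = (cc β hβ).support.card :=
      (hm2stab α hα hge).trans (hm2stab β hβ (hge.trans hαβ.le)).symm
    have himage_card : ((cc β hβ).support.image rb).card = (cc β hβ).support.card := by
      have h1 : (cc α hα).support.card ≤ ((cc β hβ).support.image rb).card :=
        Finset.card_le_card hsupp_sub
      have h2 := Finset.card_image_le (s := (cc β hβ).support) (f := rb)
      omega
    have hinj : Set.InjOn rb ((cc β hβ).support : Set ↥(B β)) :=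
      Finset.card_image_iff.mp himage_card
    have hsupp_eq : (cc α hα).support = (cc β hβ).support.image rb := by
      refine Finset.eq_of_subset_of_card_le hsupp_sub ?_
      rw [himage_card, hcard_eq]
    have happ : ∀ b ∈ (cc β hβ).support, cc α hα (rb b) = cc β hβ b := by
      intro b hb
      rw [hc']
      exact Finsupp.mapDomain_apply' ((cc β hβ).support : Set ↥(B β)) _ subset_rfl hinj hb
    rw [hsum_comp_int α β (hmono hαβ.le hβ)]
    rw [Finsupp.sum, Finsupp.sum, hsupp_eq,
      Finset.sum_image (fun x hx y hy hxy => hinj hx hy hxy)]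
    refine Finset.sum_congr rfl (fun b hb => ?_)
    rw [happ b hb]
    show ((cc β hβ b).val : ℤ) • (T β (b : Gs β →+ ZMod p)).comp
        (AddSubgroup.inclusion (hmono hαβ.le hβ)) = _
    rw [← hff (hmono hαβ.le hβ) hαβ hβ (b : Gs β →+ ZMod p) b.2]
  -- the glued integral homomorphism
  have hlvl : ∀ x : G, max (idx x) αs < κ.ord := fun x => max_lt (hidxlt x) hαs
  have hxmem : ∀ x : G, x ∈ Gs (max (idx x) αs) :=
    fun x => hmono (le_max_left _ _) (hlvl x) (hidxmem x)
  set U : (α : Ordinal) → α < κ.ord → (Gs α →+ ℤ) :=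
    fun α hα => (cc α hα).sum fun b a => ((a.val : ℤ)) • T α (b : Gs α →+ ZMod p) with hUdef
  set hfun : G → ℤ := fun x => U (max (idx x) αs) (hlvl x) ⟨x, hxmem x⟩ with hfundef
  have hval : ∀ (x : G) (α : Ordinal) (hα : α < κ.ord), αs ≤ α → ∀ (hx : x ∈ Gs α),
      hfun x = U α hα ⟨x, hx⟩ := by
    intro x α hα hge hx
    have hβ : max (max (idx x) αs) α < κ.ord := max_lt (hlvl x) hα
    have hstep : ∀ (α' : Ordinal) (hα' : α' < κ.ord), αs ≤ α' →
        ∀ (hle' : α' ≤ max (max (idx x) αs) α) (hx' : x ∈ Gs α'),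
        U α' hα' ⟨x, hx'⟩ = U _ hβ ⟨x, hmono hle' hβ hx'⟩ := by
      intro α' hα' hge' hle' hx'
      rcases eq_or_lt_of_le hle' with heq' | hlt'
      · subst heq'
        rfl
      · have h5 := hU α' _ hα' hβ hge' hlt'
        exact (congrArg (fun φ => φ (⟨x, hx'⟩ : Gs α')) h5).symm
    have l1 := hstep (max (idx x) αs) (hlvl x) (le_max_right _ _) (le_max_left _ _) (hxmem x)
    have l2 := hstep α hα hge (le_max_right _ _) hx
    exact l1.trans l2.symm
  have haddf : ∀ x y : G, hfun (x + y) = hfun x + hfun y := by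
    intro x y
    have hγ : max (max (max (idx x) αs) (max (idx y) αs)) (max (idx (x+y)) αs) < κ.ord :=
      max_lt (max_lt (hlvl x) (hlvl y)) (hlvl (x+y))
    have hge : αs ≤ max (max (max (idx x) αs) (max (idx y) αs)) (max (idx (x+y)) αs) :=
      (le_max_right (idx (x+y)) αs).trans (le_max_right _ _)
    have hxγ : x ∈ Gs _ :=
      hmono ((le_max_left _ _).trans (le_max_left _ _)) hγ (hxmem x)
    have hyγ : y ∈ Gs _ :=
      hmono ((le_max_right _ _).trans (le_max_left _ _)) hγ (hxmem y)
    have hxyγ : x + y ∈ Gs (max (max (max (idx x) αs) (max (idx y) αs)) (max (idx (x+y)) αs)) :=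
      AddSubgroup.add_mem _ hxγ hyγ
    rw [hval x _ hγ hge hxγ, hval y _ hγ hge hyγ, hval (x+y) _ hγ hge hxyγ]
    exact (U _ hγ).map_add ⟨x, hxγ⟩ ⟨y, hyγ⟩
  refine ⟨(zc αs hαs).support, fun γ => zc αs hαs γ, AddMonoidHom.mk' hfun haddf, ?_, ?_⟩
  · intro γ hγ
    have h1 : γ < (lam αs).ord := hzsupp αs hαs γ hγ
    have hbdd : BddAbove (Set.range fun α : {α : Ordinal // α < κ.ord} => lam α.1) := by
      refine ⟨Cardinal.lift (Cardinal.mk (G → ZMod p)), ?_⟩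
      rintro y ⟨⟨α, hα⟩, rfl⟩
      exact my_card_bound p (lam α) (Gs α) (fun γ => f α γ.1) (hfb α hα).injective
    have h2 : lam αs ≤ lamSup := by
      rw [hsup]
      exact le_ciSup hbdd ⟨αs, hαs⟩
    exact h1.trans_le (Cardinal.ord_le_ord.2 h2)
  · ext x
    have hα := hlvl x
    have hx := hxmem x
    have hge : αs ≤ max (idx x) αs := le_max_right _ _
    have hSig : (∑ γ ∈ (zc αs hαs).support, (fun γ => zc αs hαs γ) γ • F γ) x
        = ∑ γ ∈ (zc αs hαs).support, zc αs hαs γ • F γ x := by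
      rw [AddMonoidHom.finset_sum_apply]
      rfl
    have hgx : g x = (∑ γ ∈ (zc αs hαs).support, zc αs hαs γ • F γ x)
        + (((cc (max (idx x) αs) hα).sum fun b a => a • (b : Gs _ →+ ZMod p)) ⟨x, hx⟩) := by
      have h0 : g x = (g.comp (Gs (max (idx x) αs)).subtype) ⟨x, hx⟩ := rfl
      rw [h0, hgeq _ hα, AddMonoidHom.add_apply]
      congr 1
      have hz : zc (max (idx x) αs) hα = zc αs hαs := hzstab _ hα hge
      rw [Finsupp.sum, AddMonoidHom.finset_sum_apply, hz]
      refine Finset.sum_congr rfl (fun γ hγ => ?_)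
      have hgl : γ < (lam (max (idx x) αs)).ord := hzsupp _ hα γ (by rw [hz]; exact hγ)
      show zc αs hαs γ • f (max (idx x) αs) γ ⟨x, hx⟩ = zc αs hαs γ • F γ x
      rw [hF hα hgl ⟨x, hx⟩]
    have hcast : ((Int.castAddHom (ZMod p)).comp (AddMonoidHom.mk' hfun haddf)) x
        = ((cc (max (idx x) αs) hα).sum fun b a => a • (b : Gs _ →+ ZMod p)) ⟨x, hx⟩ := by
      show ((hfun x : ℤ) : ZMod p) = _
      rw [hval x _ hα hge hx]
      simp only [hUdef]
      rw [Finsupp.sum, AddMonoidHom.finset_sum_apply, Finsupp.sum,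
        AddMonoidHom.finset_sum_apply]
      push_cast
      refine Finset.sum_congr rfl (fun b hb => ?_)
      have he := hfe _ hα (b : Gs (max (idx x) αs) →+ ZMod p) b.2
      have he' : ((T (max (idx x) αs) (b : Gs _ →+ ZMod p) ⟨x, hx⟩ : ℤ) : ZMod p)
          = (b : Gs (max (idx x) αs) →+ ZMod p) ⟨x, hx⟩ :=
        congrArg (fun φ => φ (⟨x, hx⟩ : Gs (max (idx x) αs))) he
      show ((((cc _ hα b).val : ℤ) • T (max (idx x) αs) (b : Gs _ →+ ZMod p) ⟨x, hx⟩ : ℤ)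
          : ZMod p) = cc _ hα b • (b : Gs (max (idx x) αs) →+ ZMod p) ⟨x, hx⟩
      rw [zsmul_eq_mul, Int.cast_mul, he', smul_eq_mul]
      congr 1
      push_cast [ZMod.natCast_val, ZMod.cast_id]
      ring
    rw [AddMonoidHom.sub_apply, hSig, hgx, hcast]
    abel
end
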